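/- The n-qubit GHZ state can be decomposed as (1/√(2^{n-m})) Σ_{x∈{0,1}^{n-m-1}} (|0⟩^⊗(m+1) + (−1)^{|x|}|1⟩^⊗(m+1)) ⊗ H^⊗(n-m-1)|x⟩, where the first m+1 tensor factors correspond to any fixed subset of m+1 qubits and |x| denotes the Hamming weight of x. -/

import Mathlib

open Complex Finset

noncomputable section

/-- The n-qubit GHZ state (|0⟩^⊗n + |1⟩^⊗n)/√2, as an amplitude function. -/
def ghz (n : ℕ) : (Fin n → Fin 2) → ℂ :=
  fun x => if (∀ i, x i = 0) ∨ (∀ i, x i = 1) then ((1 / Real.sqrt 2 : ℝ) : ℂ) else 0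

/-- The Hadamard gate. -/
def Hmat : Matrix (Fin 2) (Fin 2) ℂ :=
  ((Real.sqrt 2)⁻¹ : ℝ) • !![1, 1; 1, -1]

/-- Amplitude of the state (|0⟩^⊗k + s·|1⟩^⊗k) (unnormalised GHZ-type state with sign s). -/
def ghzPart (k : ℕ) (s : ℂ) : (Fin k → Fin 2) → ℂ :=
  fun a => if ∀ i, a i = 0 then 1 else if ∀ i, a i = 1 then s else 0

lemma csqrt2_ne : ((Real.sqrt 2 : ℝ) : ℂ) ≠ 0 := by
  exact_mod_cast (by positivity : Real.sqrt 2 ≠ 0)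

lemma mulself : ((Real.sqrt 2 : ℝ) : ℂ) * ((Real.sqrt 2 : ℝ) : ℂ) = 2 := by
  rw [← Complex.ofReal_mul, Real.mul_self_sqrt (by norm_num : (0:ℝ) ≤ 2)]; norm_num

lemma key : (((Real.sqrt 2:ℝ):ℂ))⁻¹ + (((Real.sqrt 2:ℝ):ℂ))⁻¹ = ((Real.sqrt 2:ℝ):ℂ) := by
  field_simp
  linear_combination -mulself

lemma sumH (c : Fin 2) : ∑ b : Fin 2, Hmat c b = if c = 0 then ((Real.sqrt 2 : ℝ) : ℂ) else 0 := by
  fin_cases c <;>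
    simp [Hmat, Fin.sum_univ_two, Matrix.smul_apply, Complex.real_smul]
  exact key

lemma sumH' (c : Fin 2) :
    ∑ b : Fin 2, (-1 : ℂ) ^ (b : ℕ) * Hmat c b = if c = 1 then ((Real.sqrt 2 : ℝ) : ℂ) else 0 := by
  fin_cases c <;>
    simp [Hmat, Fin.sum_univ_two, Matrix.smul_apply, Complex.real_smul]
  exact key

/-- Decomposition of the n-qubit GHZ state with respect to an arbitrary bipartition
into m+1 participant qubits and n−m−1 non-participant qubits:
GHZ_n = (1/√(2^{n-m})) Σ_{x∈{0,1}^{n-m-1}} (|0⟩^⊗(m+1) + (−1)^{|x|}|1⟩^⊗(m+1)) ⊗ H^⊗(n-m-1)|x⟩. -/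
theorem ghz_decomposition (n m : ℕ) (h : m + 1 ≤ n)
    (e : Fin n ≃ (Fin (m + 1) ⊕ Fin (n - m - 1))) (y : Fin n → Fin 2) :
    ghz n y =
      ((1 / Real.sqrt (2 ^ (n - m)) : ℝ) : ℂ) *
        ∑ x : Fin (n - m - 1) → Fin 2,
          ghzPart (m + 1) ((-1 : ℂ) ^ (∑ i, (x i).val)) (fun a => y (e.symm (Sum.inl a))) *
            ∏ i, Hmat (y (e.symm (Sum.inr i))) (x i) := by
  have hnm : n - m = (n - m - 1) + 1 := by omega
  set yL : Fin (m+1) → Fin 2 := fun a => y (e.symm (Sum.inl a)) with hyL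
  set yR : Fin (n - m - 1) → Fin 2 := fun i => y (e.symm (Sum.inr i)) with hyR
  have hsplit : ∀ c : Fin 2, (∀ j, y j = c) ↔ ((∀ a, yL a = c) ∧ ∀ i, yR i = c) := by
    intro c
    constructor
    · exact fun H => ⟨fun a => H _, fun i => H _⟩
    · rintro ⟨H1, H2⟩ j
      have : y (e.symm (e j)) = c := by
        rcases he : e j with a | b
        · exact H1 a
        · exact H2 b
      simpa using this
  have hsq : Real.sqrt (2 ^ ((n - m - 1)+1)) = (Real.sqrt 2) ^ ((n - m - 1)+1) := by
    rw [show (2:ℝ)^((n - m - 1)+1) = ((Real.sqrt 2)^((n - m - 1)+1))^2 by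
          rw [← pow_mul, mul_comm, pow_mul, Real.sq_sqrt (by norm_num : (0:ℝ) ≤ 2)],
      Real.sqrt_sq (by positivity)]
  have hr : (1 / Real.sqrt (2 ^ ((n - m - 1)+1))) * (Real.sqrt 2)^(n - m - 1)
      = 1 / Real.sqrt 2 := by
    rw [hsq, pow_succ]
    have h2 : (Real.sqrt 2)^(n - m - 1) ≠ 0 := by positivity
    have h3 : Real.sqrt 2 ≠ 0 := by positivity
    field_simp
  have hconst : ((1 / Real.sqrt (2 ^ (n - m)) : ℝ) : ℂ) * ((Real.sqrt 2 : ℝ) : ℂ) ^ (n - m - 1)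
      = ((1 / Real.sqrt 2 : ℝ) : ℂ) := by
    rw [hnm, ← hr]
    push_cast
    ring
  by_cases hA : ∀ a, yL a = 0
  · have hpart : ∀ x : Fin (n - m - 1) → Fin 2,
        ghzPart (m + 1) ((-1 : ℂ) ^ (∑ i, (x i).val)) yL = 1 := by
      intro x; simp [ghzPart, hA]
    simp only [hpart, one_mul]
    rw [show (∑ x : Fin (n - m - 1) → Fin 2, ∏ i, Hmat (yR i) (x i))
        = ∏ i, ∑ b : Fin 2, Hmat (yR i) b from (Fintype.prod_sum (fun i b => Hmat (yR i) b)).symm]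
    simp only [sumH]
    by_cases hB : ∀ i, yR i = 0
    · rw [Finset.prod_congr rfl fun i _ => if_pos (hB i), Finset.prod_const,
        Finset.card_univ, Fintype.card_fin, hconst]
      rw [ghz, if_pos (Or.inl ((hsplit 0).mpr ⟨hA, hB⟩))]
    · push_neg at hB
      obtain ⟨i, hi⟩ := hB
      rw [Finset.prod_eq_zero (Finset.mem_univ i)
        (show (if yR i = 0 then ((Real.sqrt 2:ℝ):ℂ) else 0) = 0 from if_neg hi), mul_zero]
      rw [ghz, if_neg]
      rintro (H | H)
      · exact hi (((hsplit 0).mp H).2 i)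
      · have h1 := ((hsplit 1).mp H).1 ⟨0, Nat.succ_pos m⟩
        have h0 := hA ⟨0, Nat.succ_pos m⟩
        rw [h0] at h1
        exact absurd h1 (by decide)
  · by_cases hA1 : ∀ a, yL a = 1
    · have hpart : ∀ x : Fin (n - m - 1) → Fin 2,
          ghzPart (m + 1) ((-1 : ℂ) ^ (∑ i, (x i).val)) yL
            = ∏ i, (-1 : ℂ) ^ ((x i : ℕ)) := by
        intro x
        rw [ghzPart]
        simp only [if_neg hA, if_pos hA1]
        exact (Finset.prod_pow_eq_pow_sum _ _ _).symm
      simp only [hpart]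
      have hre : ∀ x : Fin (n - m - 1) → Fin 2,
          (∏ i, (-1 : ℂ) ^ ((x i : ℕ))) * ∏ i, Hmat (yR i) (x i)
            = ∏ i, ((-1 : ℂ) ^ ((x i : ℕ)) * Hmat (yR i) (x i)) := by
        intro x; rw [Finset.prod_mul_distrib]
      rw [Finset.sum_congr rfl fun x _ => hre x]
      rw [show (∑ x : Fin (n - m - 1) → Fin 2, ∏ i, (-1:ℂ) ^ ((x i : ℕ)) * Hmat (yR i) (x i))
          = ∏ i, ∑ b : Fin 2, (-1:ℂ) ^ ((b:ℕ)) * Hmat (yR i) b from (Fintype.prod_sum (fun (i : Fin (n-m-1)) (b : Fin 2) => (-1:ℂ)^((b:ℕ)) * Hmat (yR i) b)).symm]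
      simp only [sumH']
      by_cases hB : ∀ i, yR i = 1
      · rw [Finset.prod_congr rfl fun i _ => if_pos (hB i), Finset.prod_const,
          Finset.card_univ, Fintype.card_fin, hconst]
        rw [ghz, if_pos (Or.inr ((hsplit 1).mpr ⟨hA1, hB⟩))]
      · push_neg at hB
        obtain ⟨i, hi⟩ := hB
        rw [Finset.prod_eq_zero (Finset.mem_univ i)
          (show (if yR i = 1 then ((Real.sqrt 2:ℝ):ℂ) else 0) = 0 from if_neg hi), mul_zero]
        rw [ghz, if_neg]
        rintro (H | H)
        · exact hA (((hsplit 0).mp H).1)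
        · exact hi (((hsplit 1).mp H).2 i)
    · have hpart : ∀ x : Fin (n - m - 1) → Fin 2,
          ghzPart (m + 1) ((-1 : ℂ) ^ (∑ i, (x i).val)) yL = 0 := by
        intro x; rw [ghzPart]; simp only [if_neg hA, if_neg hA1]
      simp only [hpart, zero_mul, Finset.sum_const_zero, mul_zero]
      rw [ghz, if_neg]
      rintro (H | H)
      · exact hA (((hsplit 0).mp H).1)
      · exact hA1 (((hsplit 1).mp H).1)
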